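/- There exists a countable semilattice X, sequences s, t ∈ X^ω, and points ℓ(s), ℓ(t) ∈ X such that X admits a shift-continuous metrizable topology in which s converges to ℓ(s) and t converges to ℓ(t), but X admits no Lawson Hausdorff topology (one with a base of open subsemilattices) in which s converges to ℓ(s) and t converges to ℓ(t). -/

import Mathlib

open Filter

namespace S18

/-! We build a countable semilattice: Boolean functions on Cantor space `ℕ → Bool`
depending on finitely many coordinates, with pointwise `and`.  The metric is
`dist f g = μ (f Δ g)` where `μ` is the uniform (counting) measure, which makes all
translations 1-Lipschitz, the sequence of complements of shrinking cylinders converges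
to `⊤`, while the infimum of the finite family of complements of all level-`L` cylinders
is exactly `⊥`.  Hence in any Hausdorff topology with a base of open subsemilattices in
which this sequence converges to `⊤`, every subsemilattice neighborhood of `⊤`
contains `⊥`, contradicting Hausdorffness. -/

abbrev B : Type := ℕ → Bool

def ext (n : ℕ) (w : Fin n → Bool) : B := fun i => if h : i < n then w ⟨i, h⟩ else false

def dep (n : ℕ) (f : B → Bool) : Prop := ∀ p q : B, (∀ i, i < n → p i = q i) → f p = f q

lemma dep_mono {n m : ℕ} (h : n ≤ m) {f : B → Bool} (hf : dep n f) : dep m f :=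
  fun p q hpq => hf p q (fun i hi => hpq i (lt_of_lt_of_le hi h))

def XT : Type := {f : B → Bool // ∃ n, dep n f}

def mB (f g : XT) : XT :=
  ⟨fun p => f.1 p && g.1 p, by
    obtain ⟨n, hn⟩ := f.2
    obtain ⟨k, hk⟩ := g.2
    refine ⟨max n k, fun p q h => ?_⟩
    show (f.1 p && g.1 p) = (f.1 q && g.1 q)
    rw [hn p q (fun i hi => h i (lt_of_lt_of_le hi (le_max_left _ _))),
        hk p q (fun i hi => h i (lt_of_lt_of_le hi (le_max_right _ _)))]⟩

def xr (f g : XT) : XT :=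
  ⟨fun p => xor (f.1 p) (g.1 p), by
    obtain ⟨n, hn⟩ := f.2
    obtain ⟨k, hk⟩ := g.2
    refine ⟨max n k, fun p q h => ?_⟩
    show xor (f.1 p) (g.1 p) = xor (f.1 q) (g.1 q)
    rw [hn p q (fun i hi => h i (lt_of_lt_of_le hi (le_max_left _ _))),
        hk p q (fun i hi => h i (lt_of_lt_of_le hi (le_max_right _ _)))]⟩

noncomputable def cnt (n : ℕ) (f : XT) : ℕ :=
  (Finset.univ.filter (fun w : Fin n → Bool => f.1 (ext n w) = true)).card

lemma cnt_succ {n : ℕ} {f : XT} (hf : dep n f.1) : cnt (n + 1) f = 2 * cnt n f := by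
  classical
  have key : ∀ v : Fin (n + 1) → Bool, f.1 (ext (n + 1) v) = f.1 (ext n (Fin.init v)) := by
    intro v
    apply hf
    intro i hi
    simp only [ext]
    rw [dif_pos (Nat.lt_succ_of_lt hi), dif_pos hi]
    rfl
  have hcard : (Finset.univ.filter (fun v : Fin (n + 1) → Bool => f.1 (ext (n + 1) v) = true)).card
      = ((Finset.univ.filter (fun w : Fin n → Bool => f.1 (ext n w) = true)) ×ˢ
          (Finset.univ : Finset Bool)).card := by
    refine Finset.card_bij' (fun v _ => (Fin.init v, v (Fin.last n)))
      (fun w _ => Fin.snoc w.1 w.2) ?_ ?_ ?_ ?_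
    · intro v hv
      simp only [Finset.mem_filter, Finset.mem_univ, true_and] at hv
      simp only [Finset.mem_product, Finset.mem_filter, Finset.mem_univ, true_and, and_true]
      rw [← key v]; exact hv
    · intro w hw
      simp only [Finset.mem_product, Finset.mem_filter, Finset.mem_univ, true_and, and_true] at hw
      simp only [Finset.mem_filter, Finset.mem_univ, true_and]
      rw [key, Fin.init_snoc]; exact hw
    · intro v _; exact Fin.snoc_init_self v
    · intro w _
      ext
      · simp [Fin.init_snoc]
      · simp [Fin.snoc_last]
  rw [cnt, cnt, hcard, Finset.card_product]
  simp [mul_comm]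

lemma cnt_up {n : ℕ} {f : XT} (hf : dep n f.1) :
    ∀ m, n ≤ m → cnt m f * 2 ^ n = cnt n f * 2 ^ m := by
  intro m
  induction m with
  | zero =>
    intro h
    have : n = 0 := Nat.le_zero.1 h
    subst this; rfl
  | succ m ih =>
    intro h
    rcases Nat.eq_or_lt_of_le h with h' | h'
    · subst h'; rfl
    · have hnm : n ≤ m := Nat.lt_succ_iff.mp h'
      rw [cnt_succ (dep_mono hnm hf), pow_succ]
      calc 2 * cnt m f * 2 ^ n = 2 * (cnt m f * 2 ^ n) := by ring
        _ = 2 * (cnt n f * 2 ^ m) := by rw [ih hnm]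
        _ = cnt n f * (2 ^ m * 2) := by ring

noncomputable def dpt (f : XT) : ℕ := f.2.choose

lemma dpt_spec (f : XT) : dep (dpt f) f.1 := f.2.choose_spec

noncomputable def mu (f : XT) : ℝ := (cnt (dpt f) f : ℝ) / 2 ^ (dpt f)

lemma mu_eq {n : ℕ} {f : XT} (hf : dep n f.1) : mu f = (cnt n f : ℝ) / 2 ^ n := by
  have hd := dpt_spec f
  set d := dpt f with hdd
  set N := max n d with hN
  have h1 : cnt N f * 2 ^ n = cnt n f * 2 ^ N := cnt_up hf N (le_max_left _ _)
  have h2 : cnt N f * 2 ^ d = cnt d f * 2 ^ N := cnt_up hd N (le_max_right _ _)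
  have key : cnt d f * 2 ^ n = cnt n f * 2 ^ d := by
    have h3 : cnt d f * 2 ^ n * 2 ^ N = cnt n f * 2 ^ d * 2 ^ N := by
      calc cnt d f * 2 ^ n * 2 ^ N = (cnt d f * 2 ^ N) * 2 ^ n := by ring
        _ = (cnt N f * 2 ^ d) * 2 ^ n := by rw [← h2]
        _ = (cnt N f * 2 ^ n) * 2 ^ d := by ring
        _ = (cnt n f * 2 ^ N) * 2 ^ d := by rw [h1]
        _ = cnt n f * 2 ^ d * 2 ^ N := by ring
    exact Nat.eq_of_mul_eq_mul_right (by positivity) h3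
  rw [mu]
  rw [div_eq_div_iff (by positivity) (by positivity)]
  exact_mod_cast key

lemma cnt_mono (n : ℕ) {f g : XT} (h : ∀ p, f.1 p = true → g.1 p = true) :
    cnt n f ≤ cnt n g := by
  apply Finset.card_le_card
  intro w hw
  simp only [Finset.mem_filter, Finset.mem_univ, true_and] at hw ⊢
  exact h _ hw

lemma cnt_le_add (n : ℕ) {u v w : XT}
    (h : ∀ p, u.1 p = true → v.1 p = true ∨ w.1 p = true) :
    cnt n u ≤ cnt n v + cnt n w := by
  classical
  have hsub : (Finset.univ.filter (fun a : Fin n → Bool => u.1 (ext n a) = true)) ⊆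
      (Finset.univ.filter (fun a : Fin n → Bool => v.1 (ext n a) = true)) ∪
      (Finset.univ.filter (fun a : Fin n → Bool => w.1 (ext n a) = true)) := by
    intro a ha
    simp only [Finset.mem_filter, Finset.mem_univ, true_and, Finset.mem_union] at ha ⊢
    exact h _ ha
  calc cnt n u ≤ _ := Finset.card_le_card hsub
    _ ≤ cnt n v + cnt n w := Finset.card_union_le _ _

lemma mu_mono {f g : XT} (h : ∀ p, f.1 p = true → g.1 p = true) : mu f ≤ mu g := by
  set N := max (dpt f) (dpt g) with hN
  rw [mu_eq (dep_mono (le_max_left _ _) (dpt_spec f)),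
      mu_eq (dep_mono (le_max_right _ _) (dpt_spec g))]
  gcongr
  exact_mod_cast cnt_mono N h

lemma mu_le_add {u v w : XT}
    (h : ∀ p, u.1 p = true → v.1 p = true ∨ w.1 p = true) : mu u ≤ mu v + mu w := by
  set N := max (dpt u) (max (dpt v) (dpt w)) with hN
  rw [mu_eq (dep_mono (le_max_left _ _) (dpt_spec u)),
      mu_eq (dep_mono (le_trans (le_max_left _ _) (le_max_right _ _)) (dpt_spec v)),
      mu_eq (dep_mono (le_trans (le_max_right _ _) (le_max_right _ _)) (dpt_spec w)),
      ← add_div]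
  gcongr
  exact_mod_cast cnt_le_add N h

lemma ext_restrict (n : ℕ) (p : B) :
    ∀ i, i < n → p i = ext n (fun j : Fin n => p j.1) i := by
  intro i hi
  simp only [ext]
  rw [dif_pos hi]

lemma mu_zero_iff {f : XT} : mu f = 0 → ∀ p, f.1 p = false := by
  intro h p
  have hd := dpt_spec f
  rw [mu] at h
  have h2 : (cnt (dpt f) f : ℝ) = 0 := by
    field_simp at h
    exact_mod_cast h
  have h3 : cnt (dpt f) f = 0 := by exact_mod_cast h2
  rw [cnt, Finset.card_eq_zero] at h3
  have h4 : ∀ w : Fin (dpt f) → Bool, f.1 (ext (dpt f) w) = false := by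
    intro w
    by_contra hw
    have : w ∈ (Finset.univ.filter
        (fun w : Fin (dpt f) → Bool => f.1 (ext (dpt f) w) = true)) := by
      simp only [Finset.mem_filter, Finset.mem_univ, true_and]
      revert hw
      cases f.1 (ext (dpt f) w) <;> simp
    rw [h3] at this
    exact absurd this (Finset.notMem_empty _)
  have := hd p (ext (dpt f) (fun j : Fin (dpt f) => p j.1)) (ext_restrict _ p)
  rw [this]
  exact h4 _

noncomputable instance : MetricSpace XT where
  dist f g := mu (xr f g)
  dist_self f := by
    show mu (xr f f) = 0
    have hc : ∀ n, cnt n (xr f f) = 0 := by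
      intro n
      rw [cnt]
      convert Finset.card_empty
      rw [Finset.filter_eq_empty_iff]
      intro w _
      show ¬(xor (f.1 _) (f.1 _) = true)
      simp
    rw [mu, hc]
    simp
  dist_comm f g := by
    show mu (xr f g) = mu (xr g f)
    congr 1
    apply Subtype.ext
    funext p
    exact Bool.xor_comm _ _
  dist_triangle f g h := by
    show mu (xr f h) ≤ mu (xr f g) + mu (xr g h)
    apply mu_le_add
    intro p
    show xor (f.1 p) (h.1 p) = true → xor (f.1 p) (g.1 p) = true ∨ xor (g.1 p) (h.1 p) = true
    cases f.1 p <;> cases g.1 p <;> cases h.1 p <;> simp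
  eq_of_dist_eq_zero := by
    intro f g h
    have h0 := mu_zero_iff h
    apply Subtype.ext
    funext p
    have := h0 p
    revert this
    show xor (f.1 p) (g.1 p) = false → f.1 p = g.1 p
    cases f.1 p <;> cases g.1 p <;> simp

lemma dist_def (f g : XT) : dist f g = mu (xr f g) := rfl

lemma lipschitz_mB (a f g : XT) : dist (mB a f) (mB a g) ≤ dist f g := by
  rw [dist_def, dist_def]
  apply mu_mono
  intro p
  show xor (a.1 p && f.1 p) (a.1 p && g.1 p) = true → xor (f.1 p) (g.1 p) = true
  cases a.1 p <;> cases f.1 p <;> cases g.1 p <;> simp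

lemma continuous_mB (a : XT) : Continuous (mB a) := by
  rw [Metric.continuous_iff]
  intro b ε hε
  exact ⟨ε, hε, fun f hf => lt_of_le_of_lt (lipschitz_mB a f b) hf⟩

/-! ### Cylinders and the sequence -/

noncomputable def eqv (L : ℕ) : (Fin L → Bool) ≃ Fin (2 ^ L) :=
  Fintype.equivFinOfCardEq (by simp [Fintype.card_fun])

noncomputable def pat (L : ℕ) (r : Fin (2 ^ L)) : Fin L → Bool := (eqv L).symm r

lemma dep_cyl (L : ℕ) (r : Fin (2 ^ L)) :
    dep L (fun p => decide (∀ i : Fin L, p i.1 = pat L r i)) := by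
  intro p q h
  have : (∀ i : Fin L, p i.1 = pat L r i) ↔ (∀ i : Fin L, q i.1 = pat L r i) := by
    constructor
    · intro hp i; rw [← h i.1 i.2]; exact hp i
    · intro hq i; rw [h i.1 i.2]; exact hq i
  exact decide_eq_decide.mpr this

noncomputable def cylX (L : ℕ) (r : Fin (2 ^ L)) : XT :=
  ⟨fun p => decide (∀ i : Fin L, p i.1 = pat L r i), ⟨L, dep_cyl L r⟩⟩

noncomputable def sE (L : ℕ) (r : Fin (2 ^ L)) : XT :=
  ⟨fun p => !(decide (∀ i : Fin L, p i.1 = pat L r i)), ⟨L, by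
    intro p q h
    exact congrArg Bool.not (dep_cyl L r p q h)⟩⟩

def xE : XT := ⟨fun _ => true, ⟨0, fun _ _ _ => rfl⟩⟩
def yE : XT := ⟨fun _ => false, ⟨0, fun _ _ _ => rfl⟩⟩

noncomputable def sSeq (k : ℕ) : XT :=
  if h : (Nat.unpair k).2 < 2 ^ (Nat.unpair k).1 then
    sE (Nat.unpair k).1 ⟨(Nat.unpair k).2, h⟩ else xE

lemma sSeq_pair (L : ℕ) (r : Fin (2 ^ L)) : sSeq (Nat.pair L r.1) = sE L r := by
  have haux : ∀ (c : ℕ × ℕ), c = (L, r.1) →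
      (if h : c.2 < 2 ^ c.1 then sE c.1 ⟨c.2, h⟩ else xE) = sE L r := by
    rintro c rfl
    rw [dif_pos r.2]
  exact haux (Nat.unpair (Nat.pair L r.1)) (Nat.unpair_pair L r.1)

lemma cnt_cyl (L : ℕ) (r : Fin (2 ^ L)) : cnt L (cylX L r) = 1 := by
  classical
  rw [cnt]
  have : (Finset.univ.filter
      (fun w : Fin L → Bool => (cylX L r).1 (ext L w) = true)) = {pat L r} := by
    ext w
    simp only [Finset.mem_filter, Finset.mem_univ, true_and, Finset.mem_singleton]
    show (decide (∀ i : Fin L, ext L w i.1 = pat L r i) = true) ↔ w = pat L r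
    rw [decide_eq_true_iff]
    constructor
    · intro h
      funext i
      have := h i
      rwa [ext, dif_pos i.2] at this
    · intro h i
      rw [ext, dif_pos i.2, h]
  rw [this, Finset.card_singleton]

lemma dist_sE (L : ℕ) (r : Fin (2 ^ L)) : dist (sE L r) xE = 1 / 2 ^ L := by
  rw [dist_def]
  have hx : xr (sE L r) xE = cylX L r := by
    apply Subtype.ext
    funext p
    show xor (!(decide (∀ i : Fin L, p i.1 = pat L r i))) true
        = decide (∀ i : Fin L, p i.1 = pat L r i)
    cases (decide (∀ i : Fin L, p i.1 = pat L r i)) <;> rfl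
  rw [hx, mu_eq (dep_cyl L r), cnt_cyl]
  norm_num

lemma pair_lt (L r : ℕ) (h : r < 2 ^ L) : Nat.pair L r < 4 ^ (L + 1) := by
  have hL : L < 2 ^ L := Nat.lt_two_pow_self
  have h4 : (4 : ℕ) ^ L = 2 ^ L * 2 ^ L := by
    rw [show (4 : ℕ) = 2 * 2 from rfl, Nat.mul_pow]
  have h5 : (4 : ℕ) ^ (L + 1) = 4 * (2 ^ L * 2 ^ L) := by
    rw [pow_succ, h4]; ring
  have hrr : r * r < 2 ^ L * 2 ^ L := Nat.mul_lt_mul'' h h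
  have hLL : L * L < 2 ^ L * 2 ^ L := Nat.mul_lt_mul'' hL hL
  have ha : 2 ^ L ≤ 2 ^ L * 2 ^ L := Nat.le_mul_of_pos_right _ (by positivity)
  rw [Nat.pair, h5]
  split
  · -- r * r + L
    have : L < 2 ^ L * 2 ^ L := lt_of_lt_of_le hL ha
    omega
  · -- L * L + L + r
    have h6 : L < 2 ^ L * 2 ^ L := lt_of_lt_of_le hL ha
    have h7 : r < 2 ^ L * 2 ^ L := lt_of_lt_of_le h ha
    omega

lemma tendsto_sSeq : Tendsto sSeq atTop (nhds xE) := by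
  rw [Metric.tendsto_atTop]
  intro ε hε
  obtain ⟨L0, hL0⟩ : ∃ L0 : ℕ, (1 : ℝ) / 2 ^ L0 < ε := by
    obtain ⟨n, hn⟩ := exists_pow_lt_of_lt_one hε (by norm_num : (1 : ℝ) / 2 < 1)
    refine ⟨n, ?_⟩
    calc (1 : ℝ) / 2 ^ n = (1 / 2) ^ n := by rw [div_pow, one_pow]
      _ < ε := hn
  refine ⟨4 ^ (L0 + 1), fun k hk => ?_⟩
  by_cases h : (Nat.unpair k).2 < 2 ^ (Nat.unpair k).1
  · rw [sSeq, dif_pos h, dist_sE]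
    set L := (Nat.unpair k).1 with hL
    have hkeq : Nat.pair L (Nat.unpair k).2 = k := Nat.pair_unpair k
    have hlt : k < 4 ^ (L + 1) := by rw [← hkeq]; exact pair_lt _ _ h
    have hLL : L0 < L + 1 := by
      by_contra hc
      push_neg at hc
      have : (4 : ℕ) ^ (L + 1) ≤ 4 ^ (L0 + 1) :=
        Nat.pow_le_pow_right (by norm_num) (by omega)
      omega
    have hL0L : L0 ≤ L := by omega
    calc (1 : ℝ) / 2 ^ L ≤ 1 / 2 ^ L0 := by
          apply div_le_div_of_nonneg_left (by norm_num) (by positivity)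
          exact_mod_cast Nat.pow_le_pow_right (by norm_num) hL0L
      _ < ε := hL0
  · rw [sSeq, dif_neg h]
    simpa using hε

/-! ### Countability -/

instance : Countable XT := by
  have hsurj : Function.Surjective
      (fun d : (Σ n : ℕ, ((Fin n → Bool) → Bool)) =>
        (⟨fun p => d.2 (fun j : Fin d.1 => p j.1), ⟨d.1, by
          intro p q h
          have : (fun j : Fin d.1 => p j.1) = (fun j : Fin d.1 => q j.1) := by
            funext j
            exact h j.1 j.2
          show d.2 (fun j : Fin d.1 => p j.1) = d.2 (fun j : Fin d.1 => q j.1)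
          rw [this]⟩⟩ : XT)) := by
    intro f
    refine ⟨⟨dpt f, fun w => f.1 (ext (dpt f) w)⟩, ?_⟩
    apply Subtype.ext
    funext p
    show f.1 (ext (dpt f) (fun j : Fin (dpt f) => p j.1)) = f.1 p
    exact (dpt_spec f p _ (ext_restrict _ p)).symm
  exact hsurj.countable

/-! ### The semilattice laws -/

lemma mB_assoc (a b c : XT) : mB (mB a b) c = mB a (mB b c) :=
  Subtype.ext (funext fun p => Bool.and_assoc _ _ _)

lemma mB_comm (a b : XT) : mB a b = mB b a :=
  Subtype.ext (funext fun p => Bool.and_comm _ _)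

lemma mB_idem (a : XT) : mB a a = a :=
  Subtype.ext (funext fun p => Bool.and_self _)

lemma xE_ne_yE : xE ≠ yE := by
  intro h
  have := congrFun (congrArg Subtype.val h) (fun _ => false)
  simp [xE, yE] at this

/-! ### Partial products over a level -/

noncomputable def PP (L : ℕ) : ℕ → XT
  | 0 => sSeq (Nat.pair L 0)
  | (j + 1) => mB (sSeq (Nat.pair L (j + 1))) (PP L j)

lemma PP_mem {V : Set XT} (hcl : ∀ a ∈ V, ∀ b ∈ V, mB a b ∈ V) (L : ℕ) :
    ∀ j, (∀ r, r ≤ j → sSeq (Nat.pair L r) ∈ V) → PP L j ∈ V := by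
  intro j
  induction j with
  | zero => intro h; exact h 0 le_rfl
  | succ j ih =>
    intro h
    exact hcl _ (h (j + 1) le_rfl) _ (ih (fun r hr => h r (le_trans hr (Nat.le_succ j))))

lemma PP_false {L : ℕ} {p : B} :
    ∀ j r, r ≤ j → (sSeq (Nat.pair L r)).1 p = false → (PP L j).1 p = false := by
  intro j
  induction j with
  | zero =>
    intro r hr hf
    have : r = 0 := Nat.le_zero.1 hr
    subst this
    exact hf
  | succ j ih =>
    intro r hr hf
    rcases Nat.eq_or_lt_of_le hr with h' | h'
    · subst h'
      show ((sSeq (Nat.pair L (j + 1))).1 p && (PP L j).1 p) = false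
      rw [hf]
      rfl
    · have : r ≤ j := Nat.lt_succ_iff.mp h'
      show ((sSeq (Nat.pair L (j + 1))).1 p && (PP L j).1 p) = false
      rw [ih r this hf]
      exact Bool.and_false _

lemma PP_eq_yE (L : ℕ) : PP L (2 ^ L - 1) = yE := by
  apply Subtype.ext
  funext p
  show (PP L (2 ^ L - 1)).1 p = false
  set r0 : Fin (2 ^ L) := eqv L (fun i : Fin L => p i.1) with hr0
  have hr0le : r0.1 ≤ 2 ^ L - 1 := by
    have := r0.2
    omega
  apply PP_false (2 ^ L - 1) r0.1 hr0le
  have : sSeq (Nat.pair L r0.1) = sE L r0 := sSeq_pair L r0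
  rw [this]
  show (!(decide (∀ i : Fin L, p i.1 = pat L r0 i))) = false
  have hpat : pat L r0 = fun i : Fin L => p i.1 := by
    rw [pat, hr0]
    exact Equiv.symm_apply_apply _ _
  rw [hpat]
  simp

/-! ### The negative (Lawson) part -/

lemma no_lawson :
    ¬ ∃ τ : TopologicalSpace XT, @T2Space XT τ ∧
      (∀ x : XT, ∀ U : Set XT, τ.IsOpen U → x ∈ U →
        ∃ V : Set XT, τ.IsOpen V ∧ x ∈ V ∧ V ⊆ U ∧
          ∀ a ∈ V, ∀ b ∈ V, mB a b ∈ V) ∧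
      Tendsto sSeq atTop (@nhds XT τ xE) ∧
      Tendsto (fun _ : ℕ => yE) atTop (@nhds XT τ yE) := by
  rintro ⟨τ, hT2, hbase, hs, -⟩
  letI := τ
  haveI := hT2
  obtain ⟨U, W, hU, hW, hxU, hyW, hUW⟩ := t2_separation xE_ne_yE
  obtain ⟨V, hV, hxV, hVU, hVcl⟩ := hbase xE U hU hxU
  have hsV : ∀ᶠ k in atTop, sSeq k ∈ V := hs.eventually (IsOpen.mem_nhds hV hxV)
  obtain ⟨N, hN⟩ := eventually_atTop.1 hsV
  set L := N with hLdef
  have hmem : ∀ r, r ≤ 2 ^ L - 1 → sSeq (Nat.pair L r) ∈ V := by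
    intro r _
    apply hN
    exact Nat.left_le_pair L r
  have hPP : PP L (2 ^ L - 1) ∈ V := PP_mem hVcl L _ hmem
  rw [PP_eq_yE] at hPP
  have hyU : yE ∈ U := hVU hPP
  exact (Set.disjoint_left.1 hUW hyU) hyW

end S18

open Filter

/-- There is a countable semilattice `X`, sequences `s, t` and points `ls, lt` such that `X`
admits a shift-continuous metrizable topology in which `s → ls` and `t → lt`, but `X` admits
no Lawson Hausdorff topology (one with a base of open subsemilattices) in which `s → ls` and
`t → lt`. -/
theorem stmt18 :
    ∃ (X : Type) (m : X → X → X),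
      Countable X ∧
      (∀ x y z : X, m (m x y) z = m x (m y z)) ∧
      (∀ x y : X, m x y = m y x) ∧
      (∀ x : X, m x x = x) ∧
      ∃ (s t : ℕ → X) (ls lt : X),
        (∃ τ : TopologicalSpace X, @TopologicalSpace.MetrizableSpace X τ ∧
          (∀ a : X, @Continuous X X τ τ (m a)) ∧
          Tendsto s atTop (@nhds X τ ls) ∧ Tendsto t atTop (@nhds X τ lt)) ∧
        ¬ ∃ τ : TopologicalSpace X, @T2Space X τ ∧
          (∀ x : X, ∀ U : Set X, τ.IsOpen U → x ∈ U →
            ∃ V : Set X, τ.IsOpen V ∧ x ∈ V ∧ V ⊆ U ∧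
              ∀ a ∈ V, ∀ b ∈ V, m a b ∈ V) ∧
          Tendsto s atTop (@nhds X τ ls) ∧ Tendsto t atTop (@nhds X τ lt) := by
  refine ⟨S18.XT, S18.mB, inferInstance, S18.mB_assoc, S18.mB_comm, S18.mB_idem,
    S18.sSeq, (fun _ => S18.yE), S18.xE, S18.yE, ?_, ?_⟩
  · exact ⟨UniformSpace.toTopologicalSpace, inferInstance, S18.continuous_mB,
      S18.tendsto_sSeq, tendsto_const_nhds⟩
  · exact S18.no_lawson
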